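/- Let I_pp and I_sp be independent nonnegative random variables with Laplace transforms L_{I_pp}(s) = exp(-λ_p c₁ s^{2/α}) and L_{I_sp}(s) = exp(-λ_s c₁ s^{2/α}), and let |h|² ~ Exp(1) independent of both. Then P(P_p d_p^{-α}|h|² / (P_p I_pp + P_s I_sp) ≤ β_p) = 1 - exp(-λ_p c₁ β_p^{2/α} d_p²) exp(-λ_s c₁ d_p² (P_s β_p/P_p)^{2/α}). -/

import Mathlib

open MeasureTheory ProbabilityTheory Real

lemma my_iIndepFun_ae_eq {Ω ι : Type*} [MeasurableSpace Ω] {μ : Measure Ω}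
    {β : ι → Type*} [m : ∀ i, MeasurableSpace (β i)] {f g : ∀ i, Ω → β i}
    (hf : iIndepFun f μ) (hfg : ∀ i, f i =ᵐ[μ] g i) : iIndepFun g μ := by
  classical
  rw [iIndepFun_iff] at hf ⊢
  intro s f' H
  have H' : ∀ i ∈ s, ∃ A, MeasurableSet[m i] A ∧ g i ⁻¹' A = f' i := fun i hi => H i hi
  choose A hAm hAe using H'
  set B : ι → Set Ω := fun i => if h : i ∈ s then f i ⁻¹' A i h else Set.univ with hB
  have hBmem : ∀ i ∈ s, MeasurableSet[(m i).comap (f i)] (B i) := by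
    intro i hi
    simp only [hB, dif_pos hi]
    exact ⟨A i hi, hAm i hi, rfl⟩
  have hae : ∀ i ∈ s, f' i =ᵐ[μ] B i := by
    intro i hi
    simp only [hB, dif_pos hi]
    rw [← hAe i hi]
    filter_upwards [hfg i] with ω hω
    show (g i ω ∈ A i hi) = (f i ω ∈ A i hi)
    rw [hω]
  have hinter : (⋂ i ∈ s, f' i) =ᵐ[μ] (⋂ i ∈ s, B i) := by
    have h := (Filter.eventually_all_finset s).2 hae
    filter_upwards [h] with ω hω
    show (ω ∈ ⋂ i ∈ s, f' i) = (ω ∈ ⋂ i ∈ s, B i)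
    simp only [Set.mem_iInter₂, eq_iff_iff]
    exact ⟨fun h' i hi => (eq_iff_iff.1 (hω i hi)).1 (h' i hi),
           fun h' i hi => (eq_iff_iff.1 (hω i hi)).2 (h' i hi)⟩
  rw [measure_congr hinter, hf s hBmem]
  exact Finset.prod_congr rfl fun i hi => (measure_congr (hae i hi)).symm

/-- Exact primary outage probability of Theorem 1: if `I_pp` and `I_sp` are independent
nonnegative random variables with shot-noise Laplace transforms `exp(-λ_p c₁ s^{2/α})`
and `exp(-λ_s c₁ s^{2/α})`, and `|h|² ~ Exp(1)` is independent of both, then the outage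
probability is `1 - exp(-λ_p c₁ β_p^{2/α} d_p²) exp(-λ_s c₁ d_p² (P_s β_p/P_p)^{2/α})`. -/
theorem exact_primary_outage
    {Ω : Type*} [MeasurableSpace Ω] (μ : Measure Ω) [IsProbabilityMeasure μ]
    (X Ipp Isp : Ω → ℝ)
    (hX : Measure.map X μ = expMeasure 1)
    (hIpp : Measurable Ipp) (hIsp : Measurable Isp)
    (hIppNonneg : ∀ ω, 0 ≤ Ipp ω) (hIspNonneg : ∀ ω, 0 ≤ Isp ω)
    (hindep : iIndepFun ![X, Ipp, Isp] μ)
    (α lamp lams dp Pp Ps betap : ℝ)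
    (hα : 2 < α) (hlamp : 0 < lamp) (hlams : 0 < lams) (hdp : 0 < dp)
    (hPp : 0 < Pp) (hPs : 0 < Ps) (hbetap : 0 < betap)
    (c₁ : ℝ) (hc₁ : c₁ = 2 * π ^ 2 * (Real.sin (2 * π / α))⁻¹ / α)
    (hLpp : ∀ s : ℝ, 0 < s →
      ∫ ω, Real.exp (-(s * Ipp ω)) ∂μ = Real.exp (-(lamp * c₁ * s ^ (2 / α))))
    (hLsp : ∀ s : ℝ, 0 < s →
      ∫ ω, Real.exp (-(s * Isp ω)) ∂μ = Real.exp (-(lams * c₁ * s ^ (2 / α)))) :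
    (μ {ω | Pp * dp ^ (-α) * X ω / (Pp * Ipp ω + Ps * Isp ω) ≤ betap}).toReal
      = 1 - Real.exp (-(lamp * c₁ * betap ^ (2 / α) * dp ^ 2))
          * Real.exp (-(lams * c₁ * dp ^ 2 * (Ps * betap / Pp) ^ (2 / α))) := by
  have hα0 : (0:ℝ) < α := by linarith
  have hc₁pos : 0 < c₁ := by
    rw [hc₁]
    have h1 : 0 < Real.sin (2 * π / α) := by
      apply Real.sin_pos_of_pos_of_lt_pi
      · positivity
      · rw [div_lt_iff₀ hα0]
        nlinarith [Real.pi_pos]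
    positivity
  haveI : IsProbabilityMeasure (expMeasure 1) := isProbabilityMeasure_expMeasure one_pos
  -- X is a.e. measurable
  have hXae : AEMeasurable X μ := by
    by_contra h
    rw [Measure.map_of_not_aemeasurable h] at hX
    have := congrArg (fun m : Measure ℝ => m Set.univ) hX
    simp at this
  set X' : Ω → ℝ := hXae.mk X with hX'def
  have hX'meas : Measurable X' := hXae.measurable_mk
  have hXX' : X =ᵐ[μ] X' := hXae.ae_eq_mk
  have hX' : Measure.map X' μ = expMeasure 1 := by
    rw [← Measure.map_congr hXX', hX]
  have hindep' : iIndepFun ![X', Ipp, Isp] μ := by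
    apply my_iIndepFun_ae_eq hindep
    intro i
    fin_cases i
    · simpa using hXX'
    · rfl
    · rfl
  have hmeas3 : ∀ i, Measurable (![X', Ipp, Isp] i) := by
    intro i; fin_cases i <;> simpa [hX'meas, hIpp, hIsp]
  -- μ {Ipp = 0} = 0
  have hIpp0 : μ {ω | Ipp ω = 0} = 0 := by
    have hmeasset : MeasurableSet {ω | Ipp ω = 0} := hIpp (measurableSet_singleton 0)
    have key : ∀ n : ℕ, (μ {ω | Ipp ω = 0}).toReal
        ≤ Real.exp (-(lamp * c₁ * ((n:ℝ)+1) ^ (2 / α))) := by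
      intro n
      have hs : (0:ℝ) < (n:ℝ) + 1 := by positivity
      rw [← hLpp _ hs]
      have h1 : (μ {ω | Ipp ω = 0}).toReal
          = ∫ ω, Set.indicator {ω | Ipp ω = 0} (fun _ => (1:ℝ)) ω ∂μ := by
        rw [integral_indicator_const _ hmeasset]; simp [Measure.real]
      rw [h1]
      apply integral_mono
      · exact (integrable_const (1:ℝ)).indicator hmeasset
      · apply Integrable.mono' (integrable_const (1:ℝ))
        · exact ((hIpp.const_mul _).neg.exp).aestronglyMeasurable
        · filter_upwards with ω
          rw [Real.norm_eq_abs, abs_of_pos (Real.exp_pos _)]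
          exact Real.exp_le_one_iff.2 (by
            have := hIppNonneg ω; nlinarith)
      · intro ω
        by_cases hω : Ipp ω = 0
        · simp [Set.indicator_of_mem, hω, Set.mem_setOf_eq]
        · simp only [Set.mem_setOf_eq, hω, Set.indicator_of_notMem, not_false_iff]
          positivity
    have htend : Filter.Tendsto (fun n : ℕ => Real.exp (-(lamp * c₁ * ((n:ℝ)+1) ^ (2 / α))))
        Filter.atTop (nhds 0) := by
      apply Real.tendsto_exp_atBot.comp
      have h2 : Filter.Tendsto (fun n : ℕ => ((n:ℝ)+1) ^ (2/α)) Filter.atTop Filter.atTop :=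
        (tendsto_rpow_atTop (by positivity)).comp
          (Filter.tendsto_atTop_add_const_right _ 1 tendsto_natCast_atTop_atTop)
      exact Filter.tendsto_neg_atTop_atBot.comp
        (Filter.Tendsto.const_mul_atTop (by positivity : (0:ℝ) < lamp * c₁) h2)
    have hle : (μ {ω | Ipp ω = 0}).toReal ≤ 0 :=
      ge_of_tendsto htend (Filter.Eventually.of_forall key)
    have h0 : (μ {ω | Ipp ω = 0}).toReal = 0 :=
      le_antisymm hle ENNReal.toReal_nonneg
    rcases (ENNReal.toReal_eq_zero_iff _).1 h0 with h | h
    · exact h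
    · exact absurd h (measure_ne_top μ _)
  -- abbreviations
  set a : ℝ := betap * dp ^ α with ha_def
  have ha : 0 < a := by rw [ha_def]; positivity
  set b : ℝ := betap * dp ^ α * Ps / Pp with hb_def
  have hb : 0 < b := by rw [hb_def]; positivity
  set T : Ω → ℝ := fun ω => a * Ipp ω + b * Isp ω with hT_def
  have hTmeas : Measurable T := (hIpp.const_mul a).add (hIsp.const_mul b)
  have hTnonneg : ∀ ω, 0 ≤ T ω := fun ω =>
    add_nonneg (mul_nonneg ha.le (hIppNonneg ω)) (mul_nonneg hb.le (hIspNonneg ω))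
  -- Step B: event rewriting, a.e.
  have hDpos : ∀ ω, Ipp ω ≠ 0 → 0 < Pp * Ipp ω + Ps * Isp ω := by
    intro ω h
    have h1 : 0 < Ipp ω := (hIppNonneg ω).lt_of_ne (Ne.symm h)
    nlinarith [hIspNonneg ω]
  have hset : μ {ω | Pp * dp ^ (-α) * X ω / (Pp * Ipp ω + Ps * Isp ω) ≤ betap}
      = μ {ω | X' ω ≤ T ω} := by
    apply measure_congr
    filter_upwards [hXX', compl_mem_ae_iff.2 hIpp0] with ω hXω hIω
    have hIω' : Ipp ω ≠ 0 := hIω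
    have hD := hDpos ω hIω'
    show (Pp * dp ^ (-α) * X ω / (Pp * Ipp ω + Ps * Isp ω) ≤ betap) = (X' ω ≤ T ω)
    rw [eq_iff_iff, hXω, div_le_iff₀ hD]
    have hkey : betap * (Pp * Ipp ω + Ps * Isp ω) = (Pp * dp ^ (-α)) * T ω := by
      simp only [hT_def, ha_def, hb_def]
      rw [Real.rpow_neg hdp.le]
      have hdpa : dp ^ α ≠ 0 := (Real.rpow_pos_of_pos hdp α).ne'
      field_simp
    rw [hkey, mul_le_mul_iff_of_pos_left (by positivity : (0:ℝ) < Pp * dp ^ (-α))]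
  -- Step C: compute via independence and product measure
  have hIT : IndepFun (fun ω => (Ipp ω, Isp ω)) X' μ :=
    hindep'.indepFun_prodMk hmeas3 1 2 0 (by decide) (by decide)
  have hTX : IndepFun T X' μ := by
    have h := hIT.comp (φ := fun p : ℝ × ℝ => a * p.1 + b * p.2) (ψ := id)
      ((measurable_fst.const_mul a).add (measurable_snd.const_mul b)) measurable_id
    exact h
  have hmap : μ.map (fun ω => (T ω, X' ω)) = (μ.map T).prod (expMeasure 1) := by
    rw [← hX']
    exact (indepFun_iff_map_prod_eq_prod_map_map hTmeas.aemeasurable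
      hX'meas.aemeasurable).1 hTX
  set ν := μ.map T with hν
  haveI : IsProbabilityMeasure ν := Measure.isProbabilityMeasure_map hTmeas.aemeasurable
  have hνnonneg : ∀ᵐ t ∂ν, 0 ≤ t := by
    rw [hν, ae_map_iff hTmeas.aemeasurable (measurableSet_Ici (a := (0:ℝ)))]
    exact Filter.Eventually.of_forall hTnonneg
  have hEmeasset : MeasurableSet {p : ℝ × ℝ | p.2 ≤ p.1} :=
    measurableSet_le measurable_snd measurable_fst
  have hE : μ {ω | X' ω ≤ T ω} = ∫⁻ t, ENNReal.ofReal (1 - Real.exp (-t)) ∂ν := by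
    have h1 : {ω | X' ω ≤ T ω} = (fun ω => (T ω, X' ω)) ⁻¹' {p : ℝ × ℝ | p.2 ≤ p.1} := rfl
    rw [h1, ← Measure.map_apply (hTmeas.prodMk hX'meas) hEmeasset, hmap,
      Measure.prod_apply hEmeasset]
    apply lintegral_congr_ae
    filter_upwards [hνnonneg] with t ht
    have h2 : Prod.mk t ⁻¹' {p : ℝ × ℝ | p.2 ≤ p.1} = Set.Iic t := rfl
    rw [h2]
    show expMeasure 1 (Set.Iic t) = _
    rw [expMeasure, gammaMeasure, withDensity_apply _ measurableSet_Iic]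
    have h3 : ∫⁻ x in Set.Iic t, gammaPDF 1 1 x = ∫⁻ x in Set.Iic t, exponentialPDF 1 x := rfl
    rw [h3, lintegral_exponentialPDF_eq_antiDeriv one_pos t, if_pos ht, one_mul]
  have hintexp : Integrable (fun t => Real.exp (-t)) ν := by
    apply Integrable.mono' (integrable_const (1:ℝ))
    · exact (Real.continuous_exp.comp continuous_neg).aestronglyMeasurable
    · filter_upwards [hνnonneg] with t ht
      rw [Real.norm_eq_abs, abs_of_pos (Real.exp_pos _)]
      exact Real.exp_le_one_iff.2 (by linarith)
  have hlint : ∫⁻ t, ENNReal.ofReal (1 - Real.exp (-t)) ∂ν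
      = ENNReal.ofReal (1 - ∫ t, Real.exp (-t) ∂ν) := by
    have hInt : Integrable (fun t => 1 - Real.exp (-t)) ν := (integrable_const 1).sub hintexp
    have hnn : 0 ≤ᵐ[ν] fun t => 1 - Real.exp (-t) := by
      filter_upwards [hνnonneg] with t ht
      have h4 : Real.exp (-t) ≤ 1 := Real.exp_le_one_iff.2 (by linarith)
      show (0:ℝ) ≤ 1 - Real.exp (-t)
      linarith
    rw [← ofReal_integral_eq_lintegral_ofReal (f := fun t => 1 - Real.exp (-t)) hInt hnn]
    congr 1
    rw [integral_sub (integrable_const 1) hintexp]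
    simp [measure_univ]
  have hint2 : ∫ t, Real.exp (-t) ∂ν
      = Real.exp (-(lamp * c₁ * a ^ (2/α))) * Real.exp (-(lams * c₁ * b ^ (2/α))) := by
    have hcont : Continuous fun t : ℝ => Real.exp (-t) := by fun_prop
    rw [hν, integral_map (f := fun t => Real.exp (-t)) hTmeas.aemeasurable
      hcont.aestronglyMeasurable]
    have h1 : (fun ω => Real.exp (-(T ω)))
        = (fun ω => Real.exp (-(a * Ipp ω))) * (fun ω => Real.exp (-(b * Isp ω))) := by
      funext ω
      show Real.exp (-(T ω)) = Real.exp (-(a * Ipp ω)) * Real.exp (-(b * Isp ω))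
      rw [← Real.exp_add]
      congr 1
      simp only [hT_def]
      ring
    have hIndepExp : IndepFun (fun ω => Real.exp (-(a * Ipp ω)))
        (fun ω => Real.exp (-(b * Isp ω))) μ := by
      have h := (hindep.indepFun (show (1 : Fin 3) ≠ 2 by decide)).comp
        (φ := fun x : ℝ => Real.exp (-(a * x))) (ψ := fun x : ℝ => Real.exp (-(b * x)))
        ((measurable_id.const_mul a).neg.exp) ((measurable_id.const_mul b).neg.exp)
      exact h
    have h2 := hIndepExp.integral_mul_eq_mul_integral
      ((hIpp.const_mul a).neg.exp).aestronglyMeasurable ((hIsp.const_mul b).neg.exp).aestronglyMeasurable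
    calc ∫ ω, Real.exp (-(T ω)) ∂μ
        = ∫ ω, ((fun ω => Real.exp (-(a * Ipp ω))) * (fun ω => Real.exp (-(b * Isp ω)))) ω ∂μ := by
          rw [← h1]
      _ = (∫ ω, Real.exp (-(a * Ipp ω)) ∂μ) * ∫ ω, Real.exp (-(b * Isp ω)) ∂μ := h2
      _ = Real.exp (-(lamp * c₁ * a ^ (2/α))) * Real.exp (-(lams * c₁ * b ^ (2/α))) := by
          rw [hLpp a ha, hLsp b hb]
  have hdp2 : (dp ^ α) ^ (2/α) = dp ^ (2:ℕ) := by
    rw [← Real.rpow_mul hdp.le]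
    have h5 : α * (2/α) = 2 := by field_simp
    rw [h5, show (2:ℝ) = ((2:ℕ):ℝ) by norm_num, Real.rpow_natCast]
  have hexp1 : a ^ (2/α) = betap ^ (2/α) * dp ^ 2 := by
    rw [ha_def, Real.mul_rpow hbetap.le (Real.rpow_nonneg hdp.le α), hdp2]
  have hexp2 : b ^ (2/α) = (Ps * betap / Pp) ^ (2/α) * dp ^ 2 := by
    have h6 : b = (Ps * betap / Pp) * dp ^ α := by rw [hb_def]; ring
    rw [h6, Real.mul_rpow (by positivity) (Real.rpow_nonneg hdp.le α), hdp2]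
  rw [hset, hE, hlint, hint2, hexp1, hexp2, ENNReal.toReal_ofReal]
  · congr 2 <;> ring
  · have e1 : Real.exp (-(lamp * c₁ * (betap ^ (2/α) * dp ^ 2))) ≤ 1 :=
      Real.exp_le_one_iff.2 (neg_nonpos.2 (by positivity))
    have e2 : Real.exp (-(lams * c₁ * ((Ps * betap / Pp) ^ (2/α) * dp ^ 2))) ≤ 1 :=
      Real.exp_le_one_iff.2 (neg_nonpos.2 (by positivity))
    nlinarith [Real.exp_pos (-(lamp * c₁ * (betap ^ (2/α) * dp ^ 2))),
      Real.exp_pos (-(lams * c₁ * ((Ps * betap / Pp) ^ (2/α) * dp ^ 2)))]
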